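/- Assume B_0 := 1_m − Σ_{i=1}^N B_i − B_∞ satisfies that 1_m − B_0 is invertible and B_∞ is invertible. Define F_i, F̂, F_∞ = 1_{(N+1)m} − F̂ as in the q-convolution. Then the block matrix G_∞ := b_∞ F_∞ with b_∞ = ∏(−b_i^{-1}) ≠ 0 is invertible; equivalently, F_∞ = 1_{(N+1)m} − F̂ is invertible. -/
import Mathlib


/-- If `1_m − B_0` and `B_∞` are invertible, then `F_∞ = 1 − F̂` is invertible,
and so is `G_∞ = b_∞ F_∞` with `b_∞ = ∏ (−b_i⁻¹) ≠ 0`. -/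
theorem qmc_Ginf_invertible (m N : ℕ)
    (b : Fin N → ℂ) (hb0 : ∀ i, b i ≠ 0) (hbinj : Function.Injective b)
    (Bl : Fin N → Matrix (Fin m) (Fin m) ℂ) (Binf : Matrix (Fin m) (Fin m) ℂ)
    (B0 : Matrix (Fin m) (Fin m) ℂ) (hB0 : B0 = 1 - ∑ i, Bl i - Binf)
    (hB0inv : IsUnit ((1 : Matrix (Fin m) (Fin m) ℂ) - B0))
    (hBinfinv : IsUnit Binf)
    (Fhat : Matrix (Fin (N + 1) × Fin m) (Fin (N + 1) × Fin m) ℂ)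
    (hFhat : ∀ p r, Fhat p r = (Fin.cons B0 Bl : Fin (N + 1) → Matrix (Fin m) (Fin m) ℂ) r.1 p.2 r.2) :
    IsUnit ((1 : Matrix (Fin (N + 1) × Fin m) (Fin (N + 1) × Fin m) ℂ) - Fhat) ∧
    IsUnit ((∏ i, (-(b i)⁻¹)) •
      ((1 : Matrix (Fin (N + 1) × Fin m) (Fin (N + 1) × Fin m) ℂ) - Fhat)) := by
  have hBinf_inj : Function.Injective Binf.mulVec :=
    Matrix.mulVec_injective_iff_isUnit.2 hBinfinv
  have key : IsUnit ((1 : Matrix (Fin (N + 1) × Fin m) (Fin (N + 1) × Fin m) ℂ) - Fhat) := by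
    rw [← Matrix.mulVec_injective_iff_isUnit]
    have h0 : ∀ v, ((1 : Matrix (Fin (N + 1) × Fin m) (Fin (N + 1) × Fin m) ℂ) - Fhat).mulVec v = 0
        → v = 0 := by
      intro v hv
      -- v = Fhat *ᵥ v
      have hveq : ∀ p, v p = Fhat.mulVec v p := by
        intro p
        have := congrFun hv p
        simpa [Matrix.sub_mulVec, sub_eq_zero] using this
      -- define s
      set C : Fin (N + 1) → Matrix (Fin m) (Fin m) ℂ := Fin.cons B0 Bl with hC
      set s : Fin m → ℂ := fun x => ∑ j : Fin (N + 1), ∑ y : Fin m, C j x y * v (j, y) with hs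
      have hblk : ∀ (k : Fin (N + 1)) (x : Fin m), v (k, x) = s x := by
        intro k x
        rw [hveq (k, x)]
        simp only [Matrix.mulVec, dotProduct, hs]
        rw [Fintype.sum_prod_type]
        congr 1
        ext j
        congr 1
        ext y
        rw [hFhat (k, x) (j, y)]
      -- s = (B0 + ∑ Bl) *ᵥ s
      have hsum : ∀ x, s x = ((B0 + ∑ i, Bl i).mulVec s) x := by
        intro x
        have : s x = ∑ j : Fin (N + 1), (C j).mulVec s x := by
          rw [hs]
          simp only [Matrix.mulVec, dotProduct]
          congr 1
          ext j
          congr 1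
          ext y
          rw [hblk j y]
        rw [this]
        have : (∑ j : Fin (N + 1), C j) = B0 + ∑ i, Bl i := by
          rw [hC, Fin.sum_cons]
        rw [← this]
        simp only [Matrix.mulVec, dotProduct, Finset.sum_apply, Finset.sum_mul]
        rw [Finset.sum_comm]
        simp [Matrix.sum_apply, Finset.sum_mul]
      have hBs : Binf.mulVec s = 0 := by
        funext x
        have h1 := hsum x
        have hadd : B0 + ∑ i, Bl i = 1 - Binf := by
          rw [hB0]; abel
        rw [hadd] at h1
        have : (1 - Binf : Matrix (Fin m) (Fin m) ℂ).mulVec s x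
            = s x - Binf.mulVec s x := by
          simp [Matrix.sub_mulVec]
        rw [this] at h1
        have := sub_eq_zero.2 h1.symm
        simpa using this.symm
      have hs0 : s = 0 := by
        apply hBinf_inj
        simpa using hBs
      funext p
      have := hblk p.1 p.2
      simp only [Prod.mk.eta] at this
      rw [this, hs0]
      rfl
    intro v w hvw
    have : ((1 : Matrix (Fin (N + 1) × Fin m) (Fin (N + 1) × Fin m) ℂ) - Fhat).mulVec (v - w)
        = 0 := by
      rw [Matrix.mulVec_sub, hvw, sub_self]
    have := h0 _ this
    exact sub_eq_zero.1 this
  refine ⟨key, ?_⟩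
  have hc : (∏ i, (-(b i)⁻¹)) ≠ 0 := by
    apply Finset.prod_ne_zero_iff.2
    intro i _
    simp [hb0 i]
  rw [Matrix.isUnit_iff_isUnit_det, Matrix.det_smul, isUnit_iff_ne_zero]
  exact mul_ne_zero (pow_ne_zero _ hc)
    (isUnit_iff_ne_zero.1 ((Matrix.isUnit_iff_isUnit_det _).1 key))
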